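/- For unit processing times, a k-fair solution exists if and only if the following bipartite graph has a matching saturating all job vertices: one side has a vertex v_{i,j} for each day i and client j; the other side has a vertex u_{i,d} for each day i and each due date d occurring on day i, plus m−k rejection vertices w_{1,j},…,w_{m−k,j} per client j; v_{i,j} is adjacent to u_{i,d_{i,j}} and to all of w_{1,j},…,w_{m−k,j}. -/

import Mathlib

theorem unit_jobs_k_fair_iff_matching (n m k : ℕ) (hk : k ≤ m)
    (d : Fin m → Fin n → ℕ) (hd : ∀ i j, 1 ≤ d i j) :
    (∃ σ : Fin m → Finset (Fin n),
      (∀ i, ∀ j1 ∈ σ i, ∀ j2 ∈ σ i, j1 ≠ j2 → d i j1 ≠ d i j2) ∧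
      (∀ j : Fin n, k ≤ (Finset.univ.filter (fun i => j ∈ σ i)).card)) ↔
    (∃ M : Fin m × Fin n → (Fin m × ℕ) ⊕ (Fin (m - k) × Fin n),
      Function.Injective M ∧
      (∀ (i : Fin m) (j : Fin n) (i' : Fin m) (d' : ℕ),
        M (i, j) = Sum.inl (i', d') → i' = i ∧ d' = d i j) ∧
      (∀ (i : Fin m) (j : Fin n) (ℓ : Fin (m - k)) (j' : Fin n),
        M (i, j) = Sum.inr (ℓ, j') → j' = j)) := by
  constructor
  · rintro ⟨σ, hdist, hfair⟩
    set T : Fin n → Finset (Fin m) := fun j => Finset.univ.filter (fun i => j ∉ σ i) with hT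
    have hTcard : ∀ j, (T j).card ≤ m - k := by
      intro j
      have h1 := Finset.card_filter_add_card_filter_not
        (s := (Finset.univ : Finset (Fin m))) (p := fun i => j ∈ σ i)
      have h2 := hfair j
      simp only [Finset.card_univ, Fintype.card_fin] at h1
      have : (T j).card = (Finset.univ.filter (fun i => ¬ j ∈ σ i)).card := rfl
      omega
    refine ⟨fun p => if h : p.2 ∈ σ p.1 then Sum.inl (p.1, d p.1 p.2)
      else Sum.inr (Fin.castLE (hTcard p.2)
        (((T p.2).orderIsoOfFin rfl).symm ⟨p.1, by simp [hT, h]⟩), p.2), ?_, ?_, ?_⟩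
    · rintro ⟨i1, j1⟩ ⟨i2, j2⟩ heq
      by_cases h1 : j1 ∈ σ i1 <;> by_cases h2 : j2 ∈ σ i2 <;>
        simp only [h1, h2, dif_pos, dif_neg, not_false_iff] at heq
      · obtain ⟨hi, hdd⟩ : i1 = i2 ∧ d i1 j1 = d i2 j2 := by simpa using heq
        subst hi
        have : j1 = j2 := by
          by_contra hne
          exact hdist i1 j1 h1 j2 h2 hne hdd
        subst this; rfl
      · exact absurd heq (by simp)
      · exact absurd heq (by simp)
      · have := Sum.inr.inj heq
        have hj : j1 = j2 := congrArg Prod.snd this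
        subst hj
        have hℓ := congrArg Prod.fst this
        have h3 : (((T j1).orderIsoOfFin rfl).symm ⟨i1, by simp [hT, h1]⟩)
             = (((T j1).orderIsoOfFin rfl).symm ⟨i2, by simp [hT, h2]⟩) := by
          have h4 := congrArg Fin.val hℓ
          simp only [Fin.coe_castLE] at h4
          exact Fin.val_injective h4
        have h5 := congrArg (fun x => ((((T j1).orderIsoOfFin rfl) x : T j1) : Fin m)) h3
        simp only [OrderIso.apply_symm_apply] at h5
        subst h5; rfl
    · intro i j i' d' h
      by_cases hij : j ∈ σ i <;> simp only [hij, dif_pos, dif_neg, not_false_iff] at h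
      · have := Sum.inl.inj h
        exact ⟨(congrArg Prod.fst this).symm, (congrArg Prod.snd this).symm⟩
      · exact absurd h (by simp)
    · intro i j ℓ j' h
      by_cases hij : j ∈ σ i <;> simp only [hij, dif_pos, dif_neg, not_false_iff] at h
      · exact absurd h (by simp)
      · exact (congrArg Prod.snd (Sum.inr.inj h)).symm
  · rintro ⟨M, hinj, hL, hR⟩
    refine ⟨fun i => Finset.univ.filter (fun j => (M (i, j)).isLeft), ?_, ?_⟩
    · intro i j1 h1 j2 h2 hne hdd
      simp only [Finset.mem_filter] at h1 h2
      obtain ⟨p, hp⟩ := Sum.isLeft_iff.mp h1.2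
      obtain ⟨q, hq⟩ := Sum.isLeft_iff.mp h2.2
      obtain ⟨hp1, hp2⟩ := hL i j1 p.1 p.2 (by rw [hp])
      obtain ⟨hq1, hq2⟩ := hL i j2 q.1 q.2 (by rw [hq])
      obtain ⟨pi, pd⟩ := p
      obtain ⟨qi, qd⟩ := q
      simp only at hp1 hp2 hq1 hq2
      have : M (i, j1) = M (i, j2) := by
        rw [hp, hq, hp1, hp2, hq1, hq2, hdd]
      have := hinj this
      exact hne (congrArg Prod.snd this)
    · intro j
      have hsplit := Finset.card_filter_add_card_filter_not
        (s := (Finset.univ : Finset (Fin m))) (p := fun i => (M (i, j)).isLeft)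
      simp only [Finset.card_univ, Fintype.card_fin] at hsplit
      have hR' : (Finset.univ.filter (fun i => ¬ (M (i, j)).isLeft)).card ≤ m - k := by
        have := Finset.card_le_card_of_injOn (f := fun i => M (i, j))
          (s := Finset.univ.filter (fun i => ¬ (M (i, j)).isLeft))
          (t := Finset.univ.image (fun ℓ : Fin (m - k) => Sum.inr (ℓ, j)))
          (by
            intro i hi
            simp only [Finset.mem_coe, Finset.mem_filter] at hi
            obtain ⟨q, hq⟩ := Sum.isRight_iff.mp (Sum.not_isLeft.mp hi.2)
            have := hR i j q.1 q.2 (by rw [hq])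
            subst this
            simp only [Finset.mem_coe, Finset.mem_image, Finset.mem_univ, true_and]
            exact ⟨q.1, by rw [hq]⟩)
          (by
            intro a _ b _ hab
            have := hinj hab
            exact congrArg Prod.fst this)
        calc (Finset.univ.filter (fun i => ¬ (M (i, j)).isLeft)).card
            ≤ _ := this
          _ ≤ (Finset.univ : Finset (Fin (m - k))).card := Finset.card_image_le
          _ = m - k := by simp
      have hfil : ∀ i : Fin m, (j ∈ Finset.univ.filter (fun j' => (M (i, j')).isLeft)) ↔ (M (i, j)).isLeft := by
        intro i; simp
      have : (Finset.univ.filter (fun i => j ∈ Finset.univ.filter (fun j' => (M (i, j')).isLeft))).card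
           = (Finset.univ.filter (fun i => (M (i, j)).isLeft = true)).card := by
        congr 1
        apply Finset.filter_congr
        intro i _
        simp
      rw [this]
      omega
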